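/- Let G be an infinite residually finite group that is virtually solvable, i.e., G has a solvable subgroup of finite index. Then G admits no faithful 2-transitive action on any set. -/

import Mathlib

private lemma inj2 {Ω : Type*} {x y : Ω} (h : x ≠ y) : Function.Injective (![x, y]) := by
  intro i j hij
  fin_cases i <;> fin_cases j <;> simp_all

/-- An infinite residually finite virtually solvable group admits no faithful 2-transitive
action on any set. -/
theorem no_faithful_two_transitive_of_virtually_solvable
    (G : Type*) [Group G] [Infinite G]
    (hrf : ∀ g : G, g ≠ 1 →
      ∃ (H : Type) (_ : Group H) (_ : Finite H) (φ : G →* H), φ g ≠ 1)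
    (hvs : ∃ H : Subgroup G, H.FiniteIndex ∧ IsSolvable H) :
    ∀ (Ω : Type*) (ρ : G →* Equiv.Perm Ω), Function.Injective ρ →
      ¬ ((∃ p : Fin 2 → Ω, Function.Injective p) ∧
        ∀ a b : Fin 2 → Ω, Function.Injective a → Function.Injective b →
          ∃ g : G, ∀ i, ρ g (a i) = b i) := by
  intro Ω ρ hinj ⟨⟨p, hp⟩, h2t⟩
  classical
  -- Ω is infinite
  have hΩ : Infinite Ω := by
    by_contra h
    have : Finite Ω := not_infinite_iff_finite.mp h
    have : Finite (Equiv.Perm Ω) := inferInstance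
    exact (Finite.of_injective ρ hinj).not_infinite ‹Infinite G›
  obtain ⟨H, hHfi, hHsolv⟩ := hvs
  set N := H.normalCore with hN
  have hNnorm : N.Normal := Subgroup.normalCore_normal H
  have hNfi : N.FiniteIndex := @Subgroup.finiteIndex_normalCore _ _ H hHfi
  have hNsolv : IsSolvable N :=
    have : Group.IsSolvable H := hHsolv; solvable_of_solvable_injective (Subgroup.inclusion_injective (Subgroup.normalCore_le H))
  have hNbot : N ≠ ⊥ := by
    intro hbot
    have := hNfi.index_ne_zero
    rw [hbot, Subgroup.index_bot, Nat.card_eq_zero_of_infinite] at this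
    exact this rfl
  -- derived series of N inside G
  set f : ℕ → Subgroup G := fun n => (derivedSeries N n).map N.subtype with hf
  have hf0 : f 0 = N := by
    simp only [hf, derivedSeries_zero, ← MonoidHom.range_eq_map, N.range_subtype]
  have hfs : ∀ n, f (n+1) = ⁅f n, f n⁆ := by
    intro n
    simp only [hf, derivedSeries_succ, Subgroup.map_commutator]
  have hfnorm : ∀ n, (f n).Normal := by
    intro n
    induction n with
    | zero => rw [hf0]; exact hNnorm
    | succ n ih => rw [hfs n]; exact @Subgroup.commutator_normal G _ (f n) (f n) ih ih
  have hex : ∃ n, f n = ⊥ := by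
    obtain ⟨n, hn⟩ := (isSolvable_def _).mp hNsolv
    exact ⟨n, by simp [hf, hn]⟩
  set k := Nat.find hex with hk
  have hkpos : 0 < k := by
    rcases Nat.eq_zero_or_pos k with h0 | h; swap; · exact h
    exact absurd (hf0 ▸ h0 ▸ Nat.find_spec hex) hNbot
  set A := f (k - 1) with hA
  have hAnorm : A.Normal := hfnorm _
  have hAne : A ≠ ⊥ := Nat.find_min hex (by omega)
  have hAcomm : ⁅A, A⁆ = ⊥ := by
    rw [hA, ← hfs]
    have hkk : k - 1 + 1 = k := by omega
    rw [hkk]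
    exact Nat.find_spec hex
  have hAab : ∀ a ∈ A, ∀ b ∈ A, a * b = b * a := by
    intro a ha b hb
    have : (@Bracket.bracket G G commutatorElement a b) ∈ ⁅A, A⁆ := Subgroup.commutator_mem_commutator ha hb
    rw [hAcomm] at this
    exact commutatorElement_eq_one_iff_mul_comm.mp (Subgroup.mem_bot.mp this)
  -- A is transitive on Ω
  obtain ⟨⟨a₀, ha₀A⟩, ha₀'⟩ := Subgroup.ne_bot_iff_exists_ne_one.mp hAne
  have ha₀ : a₀ ≠ 1 := by simpa using ha₀'
  have ha₀move : ∃ x : Ω, ρ a₀ x ≠ x := by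
    by_contra h
    push_neg at h
    exact ha₀ (hinj (Equiv.ext fun x => by simpa using h x))
  obtain ⟨x₀, hx₀⟩ := ha₀move
  have htransA : ∀ y z : Ω, ∃ n ∈ A, ρ n y = z := by
    intro y z
    rcases eq_or_ne y z with rfl | hyz
    · exact ⟨1, A.one_mem, by simp⟩
    obtain ⟨g, hg⟩ := h2t ![x₀, ρ a₀ x₀] ![y, z] (inj2 (Ne.symm hx₀)) (inj2 hyz)
    have hg0 : ρ g x₀ = y := by simpa using hg 0
    have hg1 : ρ g (ρ a₀ x₀) = z := by simpa using hg 1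
    refine ⟨g * a₀ * g⁻¹, hAnorm.conj_mem a₀ ha₀A g, ?_⟩
    have : ρ g⁻¹ y = x₀ := by rw [← hg0]; simp
    simp only [map_mul, Equiv.Perm.mul_apply]
    rw [this, hg1]
  -- A acts freely
  have hAfree : ∀ a ∈ A, ∀ x : Ω, ρ a x = x → a = 1 := by
    intro a ha x hax
    apply hinj
    simp only [map_one]
    ext y
    obtain ⟨n, hnA, hny⟩ := htransA x y
    have : a * n = n * a := hAab a ha n hnA
    calc ρ a y = ρ a (ρ n x) := by rw [hny]
    _ = ρ (a * n) x := by simp [Equiv.Perm.mul_apply]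
    _ = ρ n (ρ a x) := by rw [this]; simp [Equiv.Perm.mul_apply]
    _ = y := by rw [hax, hny]
    _ = (1 : Equiv.Perm Ω) y := by simp
  -- A is infinite
  have hAinf : Infinite A := by
    refine Infinite.of_surjective (fun a : A => ρ a x₀) ?_
    intro y
    obtain ⟨n, hnA, hny⟩ := htransA x₀ y
    exact ⟨⟨n, hnA⟩, hny⟩
  -- all nontrivial elements of A are conjugate
  have hconj : ∀ a ∈ A, a ≠ 1 → ∀ b ∈ A, b ≠ 1 → ∃ g : G, g * a * g⁻¹ = b := by
    intro a ha hane b hb hbne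
    have hax : ρ a x₀ ≠ x₀ := fun h => hane (hAfree a ha x₀ h)
    have hbx : ρ b x₀ ≠ x₀ := fun h => hbne (hAfree b hb x₀ h)
    obtain ⟨g, hg⟩ := h2t ![x₀, ρ a x₀] ![x₀, ρ b x₀] (inj2 (Ne.symm hax)) (inj2 (Ne.symm hbx))
    have hg0 : ρ g x₀ = x₀ := by simpa using hg 0
    have hg1 : ρ g (ρ a x₀) = ρ b x₀ := by simpa using hg 1
    refine ⟨g, ?_⟩
    have hc : g * a * g⁻¹ ∈ A := hAnorm.conj_mem a ha g
    have hginv : (ρ g)⁻¹ x₀ = x₀ := by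
      apply (ρ g).injective
      rw [Equiv.Perm.coe_inv, Equiv.apply_symm_apply, hg0]
    have hfix : ρ (b⁻¹ * (g * a * g⁻¹)) x₀ = x₀ := by
      simp only [map_mul, map_inv, Equiv.Perm.mul_apply]
      rw [hginv, hg1, Equiv.Perm.coe_inv, Equiv.symm_apply_apply]
    have h1 := hAfree _ (A.mul_mem (A.inv_mem hb) hc) x₀ hfix
    rw [mul_eq_one_iff_eq_inv] at h1
    exact (inv_injective h1).symm
  -- residual finiteness contradiction
  obtain ⟨a, haA, hane⟩ : ∃ a ∈ A, a ≠ 1 := by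
    obtain ⟨⟨a, haA⟩, ha⟩ := Subgroup.ne_bot_iff_exists_ne_one.mp hAne
    exact ⟨a, haA, by simpa using ha⟩
  obtain ⟨F, _, _, φ, hφa⟩ := hrf a hane
  obtain ⟨u, v, huv, hne⟩ := Finite.exists_ne_map_eq_of_infinite (fun x : A => φ x)
  set b := (u : G) * (v : G)⁻¹ with hb
  have hbA : b ∈ A := A.mul_mem u.2 (A.inv_mem v.2)
  have hbne : b ≠ 1 := by
    intro h
    rw [hb, mul_inv_eq_one] at h
    exact huv (Subtype.ext h)
  have hφb : φ b = 1 := by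
    rw [hb, map_mul, map_inv, hne, mul_inv_cancel]
  obtain ⟨g, hg⟩ := hconj a haA hane b hbA hbne
  have h1 : φ g * φ a * (φ g)⁻¹ = 1 := by
    rw [← map_inv, ← map_mul, ← map_mul, hg, hφb]
  have h2 : φ g * φ a = φ g * 1 := by rw [mul_one]; exact mul_inv_eq_one.mp h1
  exact hφa (mul_left_cancel h2)
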